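/- arXiv:2409.03331 — 3 statements merged into one kernel-verified Lean document; each statement's English description precedes it below -/
import Mathlib

section
/- Let f be a real-valued C² function on [0,1] such that |f′(x)| ≥ A and |f″(x)| ≤ B for all x ∈ [0,1], where A > 0. Then |∫₀¹ e^{2πi f(x)} dx| ≤ 1/A + B/A². -/
open MeasureTheory intervalIntegral

/-- Van der Corput-type inequality (Kaufman): if `f` is C² on [0,1] with
`|f'| ≥ A` and `|f''| ≤ B`, then `|∫₀¹ e(f(x)) dx| ≤ 1/A + B/A²`. -/
theorem van_der_corput_nonstationary
    (f f' f'' : ℝ → ℝ) (A B : ℝ) (hA : 0 < A)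
    (hf' : ∀ x ∈ Set.Icc (0:ℝ) 1, HasDerivWithinAt f (f' x) (Set.Icc 0 1) x)
    (hf'' : ∀ x ∈ Set.Icc (0:ℝ) 1, HasDerivWithinAt f' (f'' x) (Set.Icc 0 1) x)
    (hcont : ContinuousOn f'' (Set.Icc (0:ℝ) 1))
    (hlb : ∀ x ∈ Set.Icc (0:ℝ) 1, A ≤ |f' x|)
    (hub : ∀ x ∈ Set.Icc (0:ℝ) 1, |f'' x| ≤ B) :
    ‖∫ x in (0:ℝ)..1,
        Complex.exp ((((2 * Real.pi * f x) : ℝ) : ℂ) * Complex.I)‖ ≤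
      1 / A + B / A ^ 2 := by
  set s : Set ℝ := Set.Icc (0:ℝ) 1 with hs
  set g : ℝ → ℂ := fun x => Complex.exp ((((2 * Real.pi * f x) : ℝ) : ℂ) * Complex.I) with hg
  set c : ℂ := 2 * Real.pi * Complex.I with hc
  have hπ : (0:ℝ) < Real.pi := Real.pi_pos
  have hc0 : c ≠ 0 := by
    simp [hc, Complex.ext_iff, Real.pi_ne_zero]
  have habsc : ‖c‖ = 2 * Real.pi := by
    rw [hc]
    simp [abs_of_pos hπ]
  have hgabs : ∀ x, ‖g x‖ = 1 := by
    intro x; rw [hg]; exact Complex.norm_exp_ofReal_mul_I _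
  have hf'ne : ∀ x ∈ s, (f' x : ℂ) ≠ 0 := by
    intro x hx
    have h1 := hlb x hx
    have : f' x ≠ 0 := by
      intro h; rw [h] at h1; simp at h1; linarith
    exact_mod_cast this
  -- derivative of g within s
  have hgderiv : ∀ x ∈ s, HasDerivWithinAt g (c * (f' x) * g x) s x := by
    intro x hx
    have h1 : HasDerivWithinAt (fun y => ((f y : ℝ) : ℂ)) ((f' x : ℝ) : ℂ) s x :=
      Complex.ofRealCLM.hasFDerivAt.comp_hasDerivWithinAt x (hf' x hx)
    have key := (h1.const_mul ((2 * Real.pi : ℝ) : ℂ)).mul_const Complex.I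
    have h2 : HasDerivWithinAt (fun y => (((2 * Real.pi * f y : ℝ)) : ℂ) * Complex.I)
        (c * (f' x)) s x := by
      have heq : (fun y => (((2 * Real.pi * f y : ℝ)) : ℂ) * Complex.I)
          = fun y => ((2 * Real.pi : ℝ) : ℂ) * ((f y : ℝ) : ℂ) * Complex.I := by
        funext y; push_cast; ring
      rw [heq]
      refine key.congr_deriv ?_
      rw [hc]; push_cast; ring
    simpa [hg, mul_comm] using h2.cexp
  -- continuity
  have hf'cont : ContinuousOn f' s := fun x hx => (hf'' x hx).continuousWithinAt
  have hfcont : ContinuousOn f s := fun x hx => (hf' x hx).continuousWithinAt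
  have hgcont : ContinuousOn g s := by
    apply Continuous.comp_continuousOn Complex.continuous_exp
    exact (Complex.continuous_ofReal.comp_continuousOn
      (continuousOn_const.mul hfcont)).mul continuousOn_const
  -- the antiderivative h and remainder r
  set h : ℝ → ℂ := fun x => g x / (c * (f' x)) with hh
  set r : ℝ → ℂ := fun x => g x * (f'' x) / (c * (f' x) ^ 2) with hr
  have hhderiv : ∀ x ∈ s, HasDerivWithinAt h (g x - r x) s x := by
    intro x hx
    have hd : HasDerivWithinAt (fun y => c * ((f' y : ℝ) : ℂ)) (c * (f'' x)) s x := by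
      have h1 : HasDerivWithinAt (fun y => ((f' y : ℝ) : ℂ)) ((f'' x : ℝ) : ℂ) s x :=
        Complex.ofRealCLM.hasFDerivAt.comp_hasDerivWithinAt x (hf'' x hx)
      exact h1.const_mul c
    have hne : c * ((f' x : ℝ) : ℂ) ≠ 0 := mul_ne_zero hc0 (hf'ne x hx)
    have hkey := (hgderiv x hx).div hd hne
    have hne' : (f' x : ℂ) ≠ 0 := hf'ne x hx
    rw [hh, hr]
    refine hkey.congr_deriv ?_
    clear_value g c
    field_simp
  have hrcont : ContinuousOn r s := by
    apply ContinuousOn.div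
    · exact hgcont.mul (Complex.continuous_ofReal.comp_continuousOn hcont)
    · exact continuousOn_const.mul ((Complex.continuous_ofReal.comp_continuousOn hf'cont).pow 2)
    · intro x hx
      exact mul_ne_zero hc0 (pow_ne_zero 2 (hf'ne x hx))
  have hhcont : ContinuousOn h s := by
    apply ContinuousOn.div hgcont
      (continuousOn_const.mul (Complex.continuous_ofReal.comp_continuousOn hf'cont))
    intro x hx; exact mul_ne_zero hc0 (hf'ne x hx)
  have huIcc : Set.uIcc (0:ℝ) 1 = s := by rw [Set.uIcc_of_le zero_le_one]
  have hgint : IntervalIntegrable g volume 0 1 := by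
    apply ContinuousOn.intervalIntegrable; rwa [huIcc]
  have hrint : IntervalIntegrable r volume 0 1 := by
    apply ContinuousOn.intervalIntegrable; rwa [huIcc]
  -- FTC
  have hFTC : ∫ x in (0:ℝ)..1, (g x - r x) = h 1 - h 0 := by
    apply intervalIntegral.integral_eq_sub_of_hasDeriv_right_of_le zero_le_one hhcont
    · intro x hx
      exact (hhderiv x (Set.mem_Icc_of_Ioo hx)).mono_of_mem_nhdsWithin
        (Icc_mem_nhdsGT_of_mem ⟨hx.1.le, hx.2⟩)
    · exact hgint.sub hrint
  have hsplit : (∫ x in (0:ℝ)..1, g x) = (h 1 - h 0) + ∫ x in (0:ℝ)..1, r x := by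
    rw [← hFTC, intervalIntegral.integral_sub hgint hrint]; ring
  -- bounds
  have hA2 : (0:ℝ) < A ^ 2 := by positivity
  have hB0 : 0 ≤ B := le_trans (abs_nonneg _) (hub 0 (by norm_num [hs]))
  have hhbound : ∀ x ∈ s, ‖h x‖ ≤ 1 / (2 * Real.pi * A) := by
    intro x hx
    rw [hh]
    simp only [norm_div, norm_mul, hgabs, habsc, Complex.norm_real, Real.norm_eq_abs]
    have h1 := hlb x hx
    have hfx : 0 < |f' x| := lt_of_lt_of_le hA h1
    rw [div_le_div_iff₀ (by positivity) (mul_pos (by positivity) hA)]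
    nlinarith [hπ]
  have hrbound : ∀ x ∈ s, ‖r x‖ ≤ B / (2 * Real.pi * A ^ 2) := by
    intro x hx
    rw [hr]
    simp only [norm_div, norm_mul, norm_pow, hgabs, habsc, Complex.norm_real, Real.norm_eq_abs]
    have h1 := hlb x hx
    have h2 := hub x hx
    have h3 : A ^ 2 ≤ |f' x| ^ 2 := by nlinarith [abs_nonneg (f' x)]
    have hfx : 0 < |f' x| := lt_of_lt_of_le hA h1
    rw [div_le_div_iff₀ (by positivity) (mul_pos (by positivity) hA2)]
    calc 1 * |f'' x| * (2 * Real.pi * A ^ 2) = |f'' x| * A ^ 2 * (2 * Real.pi) := by ring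
      _ ≤ B * |f' x| ^ 2 * (2 * Real.pi) := by
          apply mul_le_mul_of_nonneg_right _ (by positivity)
          exact mul_le_mul h2 h3 (by positivity) hB0
      _ = B * (2 * Real.pi * |f' x| ^ 2) := by ring
  have hrint_bound : ‖∫ x in (0:ℝ)..1, r x‖ ≤ B / (2 * Real.pi * A ^ 2) := by
    have := intervalIntegral.norm_integral_le_of_norm_le_const
      (C := B / (2 * Real.pi * A ^ 2)) (f := r) (a := (0:ℝ)) (b := 1) ?_
    · simpa using this
    · intro x hx
      rw [Set.uIoc_of_le zero_le_one] at hx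
      exact hrbound x ⟨hx.1.le, hx.2⟩
  -- combine
  rw [hsplit]
  have h0s : (0:ℝ) ∈ s := by norm_num [hs]
  have h1s : (1:ℝ) ∈ s := by norm_num [hs]
  have step1 : ‖h 1 - h 0 + ∫ x in (0:ℝ)..1, r x‖
      ≤ 1 / (2 * Real.pi * A) + 1 / (2 * Real.pi * A) + B / (2 * Real.pi * A ^ 2) := by
    calc ‖h 1 - h 0 + ∫ x in (0:ℝ)..1, r x‖
        ≤ ‖h 1 - h 0‖ + ‖∫ x in (0:ℝ)..1, r x‖ := norm_add_le _ _
      _ ≤ (‖h 1‖ + ‖h 0‖) + B / (2 * Real.pi * A ^ 2) := by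
          exact add_le_add (by simpa using norm_sub_le (h 1) (h 0))
            hrint_bound
      _ ≤ 1 / (2 * Real.pi * A) + 1 / (2 * Real.pi * A) + B / (2 * Real.pi * A ^ 2) := by
          gcongr ?_ + ?_ + _
          · exact hhbound 1 h1s
          · exact hhbound 0 h0s
  refine step1.trans ?_
  have hπ1 : (1:ℝ) ≤ Real.pi := by linarith [Real.pi_gt_three]
  have t1 : 1 / (2 * Real.pi * A) + 1 / (2 * Real.pi * A) ≤ 1 / A := by
    rw [div_add_div _ _ (by positivity : (2*Real.pi*A) ≠ 0) (by positivity : (2*Real.pi*A) ≠ 0),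
      div_le_div_iff₀ (by positivity) hA]
    nlinarith [hA2, mul_le_mul_of_nonneg_right (show Real.pi ≤ Real.pi ^ 2 by nlinarith) hA2.le]
  have t2 : B / (2 * Real.pi * A ^ 2) ≤ B / A ^ 2 := by
    rw [div_le_div_iff₀ (mul_pos (by positivity) hA2) hA2]
    nlinarith [mul_nonneg hB0 hA2.le]
  linarith
end

section
/- Let f be a real-valued C² function on [0,1] such that f′(x) = (C₁x + C₂)·g(x) for constants C₁ > 0, C₂ ∈ ℝ and a C¹ function g on [0,1] satisfying |g(x)| ≥ A and |g′(x)| ≤ B for all x ∈ [0,1], with B ≥ A > 0. Then |∫₀¹ e^{2πi f(x)} dx| ≤ 6B/(A^{3/2}·C₁^{1/2}). -/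
open MeasureTheory intervalIntegral Set

noncomputable def vdcE (t : ℝ) : ℂ :=
  Complex.exp ((((2 * Real.pi * t) : ℝ) : ℂ) * Complex.I)

lemma vdcE_norm (t : ℝ) : ‖vdcE t‖ = 1 := by
  simp [vdcE, Complex.norm_exp]

lemma hasDerivWithinAt_ofReal_comp {f : ℝ → ℝ} {u x : ℝ} {s : Set ℝ}
    (hf : HasDerivWithinAt f u s x) :
    HasDerivWithinAt (fun y : ℝ => ((f y : ℝ) : ℂ)) (u : ℂ) s x := by
  exact hf.ofReal_comp

set_option maxHeartbeats 1000000 in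
lemma vdc_far_right (f g g' : ℝ → ℝ) (A B C₁ x₀ δ a b : ℝ)
    (hA : 0 < A) (hBA : A ≤ B) (hC₁ : 0 < C₁) (hδ : 0 < δ) (hδ1 : δ ≤ 1)
    (hab : a ≤ b) (hba : b ≤ a + 1) (hax : x₀ + δ ≤ a)
    (hf : ∀ x ∈ Icc a b, HasDerivWithinAt f (C₁ * (x - x₀) * g x) (Icc a b) x)
    (hg : ∀ x ∈ Icc a b, HasDerivWithinAt g (g' x) (Icc a b) x)
    (hgc : ContinuousOn g' (Icc a b))
    (hlb : ∀ x ∈ Icc a b, A ≤ |g x|)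
    (hub : ∀ x ∈ Icc a b, |g' x| ≤ B) :
    ‖∫ x in a..b, vdcE (f x)‖ ≤
      (1 / (2 * Real.pi)) * (3 / (C₁ * A * δ) + B / (C₁ * A ^ 2) * Real.log (2 / δ)) := by
  have hπ : (0:ℝ) < Real.pi := Real.pi_pos
  have hB : (0:ℝ) < B := lt_of_lt_of_le hA hBA
  have h2δ : (1:ℝ) ≤ 2 / δ := by rw [le_div_iff₀ hδ]; linarith
  have hlog0 : 0 ≤ Real.log (2 / δ) := Real.log_nonneg h2δ
  rcases eq_or_lt_of_le hab with rfl | hab'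
  · simp only [integral_same, norm_zero]
    apply mul_nonneg (by positivity)
    exact add_nonneg (by positivity) (mul_nonneg (by positivity) hlog0)
  set φ : ℝ → ℝ := fun x => C₁ * (x - x₀) * g x with hφdef
  set ψ : ℝ → ℝ := fun x => C₁ * g x + C₁ * (x - x₀) * g' x with hψdef
  have hgcont : ContinuousOn g (Icc a b) := fun x hx => (hg x hx).continuousWithinAt
  have hfcont : ContinuousOn f (Icc a b) := fun x hx => (hf x hx).continuousWithinAt
  have hδt : ∀ x ∈ Icc a b, δ ≤ x - x₀ := fun x hx => by
    simp only [mem_Icc] at hx; linarith [hx.1]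
  have hφd : ∀ x ∈ Icc a b, HasDerivWithinAt φ (ψ x) (Icc a b) x := by
    intro x hx
    have h1 : HasDerivWithinAt (fun y => C₁ * (y - x₀)) C₁ (Icc a b) x := by
      simpa using ((hasDerivWithinAt_id x (Icc a b)).sub_const x₀).const_mul C₁
    exact h1.mul (hg x hx)
  have hφcont : ContinuousOn φ (Icc a b) :=
    (continuousOn_const.mul (continuousOn_id.sub continuousOn_const)).mul hgcont
  have hψcont : ContinuousOn ψ (Icc a b) :=
    (continuousOn_const.mul hgcont).add
      ((continuousOn_const.mul (continuousOn_id.sub continuousOn_const)).mul hgc)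
  have hmpos : 0 < C₁ * A * δ := by positivity
  have hm : ∀ x ∈ Icc a b, C₁ * A * δ ≤ |φ x| := by
    intro x hx
    have ht := hδt x hx
    have hgx := hlb x hx
    have htpos : 0 < x - x₀ := lt_of_lt_of_le hδ ht
    have h1 : |φ x| = (C₁ * (x - x₀)) * |g x| := by
      rw [hφdef, abs_mul, abs_of_pos (by positivity : (0:ℝ) < C₁ * (x - x₀))]
    rw [h1]
    have h2 : δ * A ≤ (x - x₀) * |g x| :=
      mul_le_mul ht hgx hA.le (by linarith)
    nlinarith
  have hφ0 : ∀ x ∈ Icc a b, φ x ≠ 0 := by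
    intro x hx h
    have := hm x hx
    rw [h, abs_zero] at this
    linarith
  set D : ℝ → ℂ := fun x => (((2 * Real.pi * φ x : ℝ)) : ℂ) * Complex.I with hDdef
  set D' : ℝ → ℂ := fun x => (((2 * Real.pi * ψ x : ℝ)) : ℂ) * Complex.I with hD'def
  have hD0 : ∀ x ∈ Icc a b, D x ≠ 0 := by
    intro x hx
    apply mul_ne_zero _ Complex.I_ne_zero
    rw [Complex.ofReal_ne_zero]
    have := hφ0 x hx
    positivity
  have hDd : ∀ x ∈ Icc a b, HasDerivWithinAt D (D' x) (Icc a b) x := by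
    intro x hx
    exact (hasDerivWithinAt_ofReal_comp ((hφd x hx).const_mul (2 * Real.pi))).mul_const _
  have hEd : ∀ x ∈ Icc a b,
      HasDerivWithinAt (fun y => vdcE (f y)) (vdcE (f x) * D x) (Icc a b) x := by
    intro x hx
    have h1 : HasDerivWithinAt (fun y => (((2 * Real.pi * f y : ℝ)) : ℂ) * Complex.I)
        (D x) (Icc a b) x :=
      (hasDerivWithinAt_ofReal_comp ((hf x hx).const_mul (2 * Real.pi))).mul_const _
    simpa [vdcE] using h1.cexp
  set F : ℝ → ℂ := fun x => vdcE (f x) / D x with hFdef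
  set r : ℝ → ℂ := fun x => vdcE (f x) * D' x / (D x) ^ 2 with hrdef
  have hFd : ∀ x ∈ Icc a b, HasDerivWithinAt F (vdcE (f x) - r x) (Icc a b) x := by
    intro x hx
    have h1 := (hEd x hx).div (hDd x hx) (hD0 x hx)
    refine h1.congr_deriv (Eq.symm ?_)
    have hD := hD0 x hx
    simp only [hrdef]
    field_simp
  have hEc : ContinuousOn (fun y => vdcE (f y)) (Icc a b) := by
    apply Complex.continuous_exp.comp_continuousOn
    exact (Complex.continuous_ofReal.comp_continuousOn
      (continuousOn_const.mul hfcont)).mul continuousOn_const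
  have hDc : ContinuousOn D (Icc a b) :=
    (Complex.continuous_ofReal.comp_continuousOn
      (continuousOn_const.mul hφcont)).mul continuousOn_const
  have hD'c : ContinuousOn D' (Icc a b) :=
    (Complex.continuous_ofReal.comp_continuousOn
      (continuousOn_const.mul hψcont)).mul continuousOn_const
  have hFcont : ContinuousOn F (Icc a b) := hEc.div hDc hD0
  have hrcont : ContinuousOn r (Icc a b) :=
    (hEc.mul hD'c).div (hDc.pow 2) (fun x hx => pow_ne_zero 2 (hD0 x hx))
  have huIcc : uIcc a b = Icc a b := uIcc_of_le hab
  have hintE : IntervalIntegrable (fun y => vdcE (f y)) volume a b := by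
    apply ContinuousOn.intervalIntegrable; rwa [huIcc]
  have hintr : IntervalIntegrable r volume a b := by
    apply ContinuousOn.intervalIntegrable; rwa [huIcc]
  have key : ∫ x in a..b, (vdcE (f x) - r x) = F b - F a := by
    apply integral_eq_sub_of_hasDeriv_right_of_le hab hFcont
    · intro x hx
      exact (((hFd x (Ioo_subset_Icc_self hx)).hasDerivAt
        (Icc_mem_nhds hx.1 hx.2))).hasDerivWithinAt
    · exact hintE.sub hintr
  have split : ∫ x in a..b, vdcE (f x) = (F b - F a) + ∫ x in a..b, r x := by
    rw [← key, integral_sub hintE hintr]; ring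
  have hDnorm : ∀ x : ℝ, ‖D x‖ = 2 * Real.pi * |φ x| := by
    intro x
    simp only [hDdef]
    rw [norm_mul, Complex.norm_I, mul_one, Complex.norm_real, Real.norm_eq_abs,
      abs_mul, abs_of_pos (by positivity : (0:ℝ) < 2 * Real.pi)]
  have hD'norm : ∀ x : ℝ, ‖D' x‖ = 2 * Real.pi * |ψ x| := by
    intro x
    simp only [hD'def]
    rw [norm_mul, Complex.norm_I, mul_one, Complex.norm_real, Real.norm_eq_abs,
      abs_mul, abs_of_pos (by positivity : (0:ℝ) < 2 * Real.pi)]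
  have hFb : ∀ x ∈ Icc a b, ‖F x‖ ≤ 1 / (2 * Real.pi * (C₁ * A * δ)) := by
    intro x hx
    simp only [hFdef]
    rw [norm_div, vdcE_norm, hDnorm x]
    apply one_div_le_one_div_of_le (by positivity)
    have := hm x hx
    nlinarith
  set bnd : ℝ → ℝ := fun x =>
    (1 / (2 * Real.pi)) * (1 / (C₁ * A) * ((x - x₀) ^ 2)⁻¹ + B / (C₁ * A ^ 2) * (x - x₀)⁻¹)
    with hbnddef
  have hrnorm : ∀ x ∈ Icc a b, ‖r x‖ = |ψ x| / (2 * Real.pi * (φ x) ^ 2) := by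
    intro x hx
    simp only [hrdef]
    rw [norm_div, norm_mul, vdcE_norm, one_mul, norm_pow, hDnorm x, hD'norm x]
    have h5 : (2 * Real.pi * |φ x|) ^ 2 = (2 * Real.pi) * (2 * Real.pi * (φ x) ^ 2) := by
      rw [← sq_abs (φ x)]; ring
    rw [h5, mul_div_mul_left _ _ (by positivity : (2 * Real.pi) ≠ 0)]
  have hpt : ∀ x ∈ Icc a b, ‖r x‖ ≤ bnd x := by
    intro x hx
    rw [hrnorm x hx]
    have ht := hδt x hx
    have htpos : 0 < x - x₀ := lt_of_lt_of_le hδ ht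
    have hgx := hlb x hx
    have hg'x := hub x hx
    have hgpos : 0 < |g x| := lt_of_lt_of_le hA hgx
    have hgsq : A ^ 2 ≤ (g x) ^ 2 := by
      rw [← sq_abs (g x)]; nlinarith [hgx, hA.le, abs_nonneg (g x)]
    have hgsq0 : (0:ℝ) < (g x) ^ 2 := by
      rw [← sq_abs (g x)]; positivity
    have hψb : |ψ x| ≤ C₁ * |g x| + C₁ * (x - x₀) * B := by
      simp only [hψdef]
      calc |C₁ * g x + C₁ * (x - x₀) * g' x| ≤ |C₁ * g x| + |C₁ * (x - x₀) * g' x| :=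
            abs_add_le _ _
        _ ≤ C₁ * |g x| + C₁ * (x - x₀) * B := by
            rw [abs_mul, abs_mul, abs_mul, abs_of_pos hC₁, abs_of_pos htpos]
            have : C₁ * (x - x₀) * |g' x| ≤ C₁ * (x - x₀) * B :=
              mul_le_mul_of_nonneg_left hg'x (by positivity)
            linarith
    have hφsq : (φ x) ^ 2 = C₁ ^ 2 * (x - x₀) ^ 2 * (g x) ^ 2 := by
      simp only [hφdef]; ring
    have hkey : |ψ x| / (φ x) ^ 2 ≤
        1 / (C₁ * A) * ((x - x₀) ^ 2)⁻¹ + B / (C₁ * A ^ 2) * (x - x₀)⁻¹ := by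
      rw [hφsq]
      have hden : (0:ℝ) < C₁ ^ 2 * (x - x₀) ^ 2 * (g x) ^ 2 := by positivity
      calc |ψ x| / (C₁ ^ 2 * (x - x₀) ^ 2 * (g x) ^ 2)
          ≤ (C₁ * |g x| + C₁ * (x - x₀) * B) / (C₁ ^ 2 * (x - x₀) ^ 2 * (g x) ^ 2) :=
            (div_le_div_iff_of_pos_right hden).2 hψb
        _ = C₁ * |g x| / (C₁ ^ 2 * (x - x₀) ^ 2 * (g x) ^ 2)
            + C₁ * (x - x₀) * B / (C₁ ^ 2 * (x - x₀) ^ 2 * (g x) ^ 2) := add_div _ _ _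
        _ ≤ 1 / (C₁ * A) * ((x - x₀) ^ 2)⁻¹ + B / (C₁ * A ^ 2) * (x - x₀)⁻¹ := by
            apply add_le_add
            · have h1 : C₁ * |g x| / (C₁ ^ 2 * (x - x₀) ^ 2 * (g x) ^ 2)
                  = 1 / (C₁ * |g x|) * ((x - x₀) ^ 2)⁻¹ := by
                rw [← sq_abs (g x)]
                field_simp
              rw [h1]
              have e_a : 1 / (C₁ * |g x|) ≤ 1 / (C₁ * A) :=
                one_div_le_one_div_of_le (by positivity)
                  (mul_le_mul_of_nonneg_left hgx hC₁.le)
              exact mul_le_mul_of_nonneg_right e_a (by positivity)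
            · have h2 : C₁ * (x - x₀) * B / (C₁ ^ 2 * (x - x₀) ^ 2 * (g x) ^ 2)
                  = B / (C₁ * (g x) ^ 2) * (x - x₀)⁻¹ := by
                field_simp
              rw [h2]
              have e_b : B / (C₁ * (g x) ^ 2) ≤ B / (C₁ * A ^ 2) := by
                apply div_le_div_of_nonneg_left hB.le (by positivity)
                exact mul_le_mul_of_nonneg_left hgsq hC₁.le
              exact mul_le_mul_of_nonneg_right e_b (by positivity)
    calc |ψ x| / (2 * Real.pi * (φ x) ^ 2)
        = (1 / (2 * Real.pi)) * (|ψ x| / (φ x) ^ 2) := by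
          rw [div_mul_eq_mul_div, one_mul, div_div, mul_comm (φ x ^ 2) (2 * Real.pi)]
      _ ≤ bnd x := by
          simp only [hbnddef]
          exact mul_le_mul_of_nonneg_left hkey (by positivity)
  set G : ℝ → ℝ := fun x =>
    (1 / (2 * Real.pi)) * (1 / (C₁ * A) * (-(x - x₀)⁻¹) + B / (C₁ * A ^ 2) * Real.log (x - x₀))
    with hGdef
  have hGd : ∀ x ∈ uIcc a b, HasDerivAt G (bnd x) x := by
    intro x hx
    rw [huIcc] at hx
    have ht := hδt x hx
    have htpos : 0 < x - x₀ := lt_of_lt_of_le hδ ht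
    have ht0 : x - x₀ ≠ 0 := ne_of_gt htpos
    have h1 : HasDerivAt (fun y : ℝ => y - x₀) 1 x := (hasDerivAt_id x).sub_const x₀
    have h2 : HasDerivAt (fun y : ℝ => -(y - x₀)⁻¹) (((x - x₀) ^ 2)⁻¹) x := by
      have := (h1.inv ht0).neg
      refine this.congr_deriv (Eq.symm ?_)
      ring
    have h3 : HasDerivAt (fun y : ℝ => Real.log (y - x₀)) ((x - x₀)⁻¹) x := by
      have := h1.log ht0
      simpa using this
    have h4 := ((h2.const_mul (1 / (C₁ * A))).add
      (h3.const_mul (B / (C₁ * A ^ 2)))).const_mul (1 / (2 * Real.pi))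
    exact h4
  have hbndc : ContinuousOn bnd (Icc a b) := by
    have hne : ∀ x ∈ Icc a b, x - x₀ ≠ 0 := fun x hx =>
      ne_of_gt (lt_of_lt_of_le hδ (hδt x hx))
    apply ContinuousOn.mul continuousOn_const
    apply ContinuousOn.add
    · exact continuousOn_const.mul (ContinuousOn.inv₀
        ((continuousOn_id.sub continuousOn_const).pow 2)
        (fun x hx => pow_ne_zero 2 (hne x hx)))
    · exact continuousOn_const.mul (ContinuousOn.inv₀
        (continuousOn_id.sub continuousOn_const) hne)
  have hbint : IntervalIntegrable bnd volume a b := by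
    apply ContinuousOn.intervalIntegrable; rwa [huIcc]
  have hrint : IntervalIntegrable (fun x => ‖r x‖) volume a b := by
    apply ContinuousOn.intervalIntegrable; rw [huIcc]; exact hrcont.norm
  have hint2 : ∫ x in a..b, ‖r x‖ ≤ ∫ x in a..b, bnd x :=
    integral_mono_on hab hrint hbint hpt
  have hGeq : ∫ x in a..b, bnd x = G b - G a := integral_eq_sub_of_hasDerivAt hGd hbint
  have hta : δ ≤ a - x₀ := by linarith
  have htb : δ ≤ b - x₀ := by linarith
  have hapos : 0 < a - x₀ := lt_of_lt_of_le hδ hta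
  have hbpos : 0 < b - x₀ := lt_of_lt_of_le hδ htb
  have hGle : G b - G a ≤
      (1 / (2 * Real.pi)) * (1 / (C₁ * A * δ) + B / (C₁ * A ^ 2) * Real.log (2 / δ)) := by
    have fact1 : (a - x₀)⁻¹ - (b - x₀)⁻¹ ≤ δ⁻¹ := by
      have h1 : (a - x₀)⁻¹ ≤ δ⁻¹ := by
        apply inv_anti₀ hδ hta
      have h2 : 0 < (b - x₀)⁻¹ := by positivity
      linarith
    have fact2 : Real.log (b - x₀) - Real.log (a - x₀) ≤ Real.log (2 / δ) := by
      rw [← Real.log_div (ne_of_gt hbpos) (ne_of_gt hapos)]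
      apply Real.log_le_log (by positivity)
      rw [div_le_div_iff₀ hapos hδ]
      nlinarith
    have hc1 : (0:ℝ) ≤ 1 / (C₁ * A) := by positivity
    have hc2 : (0:ℝ) ≤ B / (C₁ * A ^ 2) := by positivity
    have e1 : 1 / (C₁ * A) * ((a - x₀)⁻¹ - (b - x₀)⁻¹) ≤ 1 / (C₁ * A) * δ⁻¹ :=
      mul_le_mul_of_nonneg_left fact1 hc1
    have e2 : B / (C₁ * A ^ 2) * (Real.log (b - x₀) - Real.log (a - x₀))
        ≤ B / (C₁ * A ^ 2) * Real.log (2 / δ) :=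
      mul_le_mul_of_nonneg_left fact2 hc2
    have e3 : 1 / (C₁ * A) * δ⁻¹ = 1 / (C₁ * A * δ) := by
      field_simp
    have expand : G b - G a =
        (1 / (2 * Real.pi)) * (1 / (C₁ * A) * ((a - x₀)⁻¹ - (b - x₀)⁻¹)
          + B / (C₁ * A ^ 2) * (Real.log (b - x₀) - Real.log (a - x₀))) := by
      simp only [hGdef]; ring
    rw [expand]
    apply mul_le_mul_of_nonneg_left _ (by positivity)
    rw [← e3]
    linarith
  calc ‖∫ x in a..b, vdcE (f x)‖
      = ‖(F b - F a) + ∫ x in a..b, r x‖ := by rw [split]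
    _ ≤ ‖F b - F a‖ + ‖∫ x in a..b, r x‖ := norm_add_le _ _
    _ ≤ (‖F b‖ + ‖F a‖) + ∫ x in a..b, ‖r x‖ :=
        add_le_add (norm_sub_le _ _) (norm_integral_le_integral_norm hab)
    _ ≤ (1 / (2 * Real.pi * (C₁ * A * δ)) + 1 / (2 * Real.pi * (C₁ * A * δ)))
        + (1 / (2 * Real.pi)) * (1 / (C₁ * A * δ) + B / (C₁ * A ^ 2) * Real.log (2 / δ)) := by
        apply add_le_add
        · exact add_le_add (hFb b ⟨hab, le_refl b⟩) (hFb a ⟨le_refl a, hab⟩)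
        · exact (hint2.trans (le_of_eq hGeq)).trans hGle
    _ = (1 / (2 * Real.pi)) * (3 / (C₁ * A * δ) + B / (C₁ * A ^ 2) * Real.log (2 / δ)) := by
        field_simp
        ring

set_option maxHeartbeats 1000000 in
/-- Van der Corput-type inequality (Kaufman) for phases with a possible stationary
point: if `f` is C² on [0,1] with `f'(x) = (C₁x + C₂)·g(x)`, where `|g| ≥ A`,
`|g'| ≤ B` and `B ≥ A > 0`, `C₁ > 0`, then `|∫₀¹ e(f(x)) dx| ≤ 6B/(A^{3/2}·C₁^{1/2})`. -/
theorem van_der_corput_stationary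
    (f f' g g' : ℝ → ℝ) (A B C₁ C₂ : ℝ) (hA : 0 < A) (hBA : A ≤ B) (hC₁ : 0 < C₁)
    (hf' : ∀ x ∈ Set.Icc (0:ℝ) 1, HasDerivWithinAt f (f' x) (Set.Icc 0 1) x)
    (hfactor : ∀ x ∈ Set.Icc (0:ℝ) 1, f' x = (C₁ * x + C₂) * g x)
    (hg' : ∀ x ∈ Set.Icc (0:ℝ) 1, HasDerivWithinAt g (g' x) (Set.Icc 0 1) x)
    (hcont : ContinuousOn g' (Set.Icc (0:ℝ) 1))
    (hlb : ∀ x ∈ Set.Icc (0:ℝ) 1, A ≤ |g x|)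
    (hub : ∀ x ∈ Set.Icc (0:ℝ) 1, |g' x| ≤ B) :
    ‖∫ x in (0:ℝ)..1,
        Complex.exp ((((2 * Real.pi * f x) : ℝ) : ℂ) * Complex.I)‖ ≤
      6 * B / (A ^ ((3:ℝ)/2) * C₁ ^ ((1:ℝ)/2)) := by
  have hπ : (0:ℝ) < Real.pi := Real.pi_pos
  have hB : (0:ℝ) < B := lt_of_lt_of_le hA hBA
  set sA := Real.sqrt A with hsAdef
  set sC := Real.sqrt C₁ with hsCdef
  have hsA : 0 < sA := Real.sqrt_pos.2 hA
  have hsC : 0 < sC := Real.sqrt_pos.2 hC₁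
  have hsA2 : sA ^ 2 = A := Real.sq_sqrt hA.le
  have hsC2 : sC ^ 2 = C₁ := Real.sq_sqrt hC₁.le
  have hpow : A ^ ((3:ℝ)/2) * C₁ ^ ((1:ℝ)/2) = A * sA * sC := by
    have h1 : A ^ ((3:ℝ)/2) = A * sA := by
      have : ((3:ℝ)/2) = 1 + 1/2 := by norm_num
      rw [this, Real.rpow_add hA, Real.rpow_one, hsAdef, Real.sqrt_eq_rpow]
    have h2 : C₁ ^ ((1:ℝ)/2) = sC := by
      rw [hsCdef, Real.sqrt_eq_rpow]
    rw [h1, h2]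
  set δ := B / (A * sA * sC) with hδdef
  have hδpos : 0 < δ := by positivity
  have hRHS : 6 * B / (A ^ ((3:ℝ)/2) * C₁ ^ ((1:ℝ)/2)) = 6 * δ := by
    rw [hpow, hδdef]; ring
  rw [hRHS]
  have hE : (fun x : ℝ => Complex.exp ((((2 * Real.pi * f x) : ℝ) : ℂ) * Complex.I))
      = fun x => vdcE (f x) := rfl
  rw [hE]
  have hcontE : ContinuousOn (fun x => vdcE (f x)) (Icc (0:ℝ) 1) := by
    apply Complex.continuous_exp.comp_continuousOn
    exact (Complex.continuous_ofReal.comp_continuousOn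
      (continuousOn_const.mul (fun x hx => (hf' x hx).continuousWithinAt))).mul
      continuousOn_const
  have htriv : ‖∫ x in (0:ℝ)..1, vdcE (f x)‖ ≤ 1 := by
    have := intervalIntegral.norm_integral_le_of_norm_le_const
      (C := 1) (f := fun x => vdcE (f x)) (a := (0:ℝ)) (b := 1)
      (fun x _ => le_of_eq (vdcE_norm (f x)))
    simpa using this
  by_cases hcase : 1 ≤ 6 * δ
  · linarith
  push_neg at hcase
  have hδ1 : δ ≤ 1 := by linarith
  have hlogpos : 0 ≤ Real.log (2 / δ) := by
    apply Real.log_nonneg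
    rw [le_div_iff₀ hδpos]
    linarith
  -- numeric facts
  have hprod2 : (A * sA * sC) ^ 2 = A ^ 3 * C₁ := by
    have : (A * sA * sC) ^ 2 = A ^ 2 * sA ^ 2 * sC ^ 2 := by ring
    rw [this, hsA2, hsC2]; ring
  have h1δ : 1 / (C₁ * A * δ) ≤ δ := by
    rw [div_le_iff₀ (by positivity)]
    have e : δ * (C₁ * A * δ) = C₁ * A * δ ^ 2 := by ring
    have h2 : C₁ * A * δ ^ 2 = B ^ 2 / A ^ 2 := by
      rw [hδdef, div_pow, hprod2]
      field_simp
    have h3 : (1:ℝ) ≤ B ^ 2 / A ^ 2 := by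
      rw [le_div_iff₀ (by positivity)]
      nlinarith
    linarith [e, h2, h3]
  have hlogb : B / (C₁ * A ^ 2) * Real.log (2 / δ) ≤ 2 * δ := by
    have hv : 2 / δ = 2 * (A * sA * sC) / B := by
      rw [hδdef]
      field_simp
    have hup : 2 / δ ≤ 2 * (sA * sC) := by
      rw [hv, div_le_iff₀ hB]
      nlinarith [mul_le_mul_of_nonneg_right hBA (by positivity : (0:ℝ) ≤ sA * sC)]
    have hlog : Real.log (2 / δ) ≤ 2 * (sA * sC) := by
      have := Real.log_le_sub_one_of_pos (by positivity : (0:ℝ) < 2 / δ)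
      linarith
    have hcoef : (0:ℝ) ≤ B / (C₁ * A ^ 2) := by positivity
    have h4 : B / (C₁ * A ^ 2) * Real.log (2 / δ) ≤ B / (C₁ * A ^ 2) * (2 * (sA * sC)) :=
      mul_le_mul_of_nonneg_left hlog hcoef
    have h5 : B / (C₁ * A ^ 2) * (2 * (sA * sC)) = 2 * δ := by
      rw [hδdef]
      have e2 : 2 * (B / (A * sA * sC)) = 2 * B / (A * sA * sC) := by ring
      rw [div_mul_eq_mul_div, e2, div_eq_div_iff (by positivity) (by positivity)]
      linear_combination 2 * B * A * sC ^ 2 * hsA2 + 2 * B * A ^ 2 * hsC2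
    linarith
  have hEbound : (1 / (2 * Real.pi)) * (3 / (C₁ * A * δ) + B / (C₁ * A ^ 2) * Real.log (2 / δ))
      ≤ 5 * δ / (2 * Real.pi) := by
    have h6 : 3 / (C₁ * A * δ) = 3 * (1 / (C₁ * A * δ)) := by ring
    have h7 : 3 / (C₁ * A * δ) + B / (C₁ * A ^ 2) * Real.log (2 / δ) ≤ 5 * δ := by
      rw [h6]; linarith
    calc (1 / (2 * Real.pi)) * (3 / (C₁ * A * δ) + B / (C₁ * A ^ 2) * Real.log (2 / δ))
        ≤ (1 / (2 * Real.pi)) * (5 * δ) := mul_le_mul_of_nonneg_left h7 (by positivity)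
      _ = 5 * δ / (2 * Real.pi) := by ring
  -- the stationary point and splitting points
  set x₀ := -C₂ / C₁ with hx₀def
  have hform : ∀ x ∈ Icc (0:ℝ) 1, f' x = C₁ * (x - x₀) * g x := by
    intro x hx
    rw [hfactor x hx, hx₀def]
    field_simp
    ring
  set p := min 1 (max 0 (x₀ - δ)) with hpdef
  set q := min 1 (max 0 (x₀ + δ)) with hqdef
  have hp0 : 0 ≤ p := le_min (by norm_num) (le_max_left _ _)
  have hp1 : p ≤ 1 := min_le_left _ _
  have hq0 : 0 ≤ q := le_min (by norm_num) (le_max_left _ _)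
  have hq1 : q ≤ 1 := min_le_left _ _
  have hpq : p ≤ q := by
    apply min_le_min (le_refl 1)
    apply max_le_max (le_refl 0)
    linarith
  have hqp2δ : q - p ≤ 2 * δ := by
    rcases le_total 1 (max 0 (x₀ - δ)) with h | h
    · have hp : p = 1 := min_eq_left h
      linarith [hq1, hδpos]
    · have hp : p = max 0 (x₀ - δ) := min_eq_right h
      have hqle : q ≤ max 0 (x₀ + δ) := min_le_right _ _
      have : max 0 (x₀ + δ) ≤ max 0 (x₀ - δ) + 2 * δ := by
        apply max_le
        · have := le_max_left (0:ℝ) (x₀ - δ); linarith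
        · have := le_max_right (0:ℝ) (x₀ - δ); linarith
      linarith
  -- integrability and splitting
  have hint : ∀ u v : ℝ, u ∈ Icc (0:ℝ) 1 → v ∈ Icc (0:ℝ) 1 →
      IntervalIntegrable (fun x => vdcE (f x)) volume u v := by
    intro u v hu hv
    exact (hcontE.mono (uIcc_subset_Icc hu hv)).intervalIntegrable
  have h01 : (0:ℝ) ∈ Icc (0:ℝ) 1 := by norm_num
  have h11 : (1:ℝ) ∈ Icc (0:ℝ) 1 := by norm_num
  have hpI : p ∈ Icc (0:ℝ) 1 := ⟨hp0, hp1⟩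
  have hqI : q ∈ Icc (0:ℝ) 1 := ⟨hq0, hq1⟩
  have s2 : (∫ x in p..q, vdcE (f x)) + (∫ x in q..1, vdcE (f x)) = ∫ x in p..1, vdcE (f x) :=
    integral_add_adjacent_intervals (hint p q hpI hqI) (hint q 1 hqI h11)
  have s1 : (∫ x in (0:ℝ)..p, vdcE (f x)) + (∫ x in p..1, vdcE (f x))
      = ∫ x in (0:ℝ)..1, vdcE (f x) :=
    integral_add_adjacent_intervals (hint 0 p h01 hpI) (hint p 1 hpI h11)
  -- middle piece
  have hmid : ‖∫ x in p..q, vdcE (f x)‖ ≤ 2 * δ := by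
    have := intervalIntegral.norm_integral_le_of_norm_le_const
      (C := 1) (f := fun x => vdcE (f x)) (a := p) (b := q)
      (fun x _ => le_of_eq (vdcE_norm (f x)))
    rw [abs_of_nonneg (by linarith : (0:ℝ) ≤ q - p)] at this
    linarith
  -- left piece
  have hleft : ‖∫ x in (0:ℝ)..p, vdcE (f x)‖ ≤
      (1 / (2 * Real.pi)) * (3 / (C₁ * A * δ) + B / (C₁ * A ^ 2) * Real.log (2 / δ)) := by
    rcases eq_or_lt_of_le hp0 with hp0' | hp0'
    · rw [← hp0', integral_same, norm_zero]
      exact mul_nonneg (by positivity)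
        (add_nonneg (by positivity) (mul_nonneg (by positivity) hlogpos))
    · -- p > 0, so p ≤ x₀ - δ
      have hM : 0 < max 0 (x₀ - δ) := lt_of_lt_of_le hp0' (min_le_right _ _)
      have hM' : max 0 (x₀ - δ) = x₀ - δ := by
        rcases max_choice (0:ℝ) (x₀ - δ) with h | h
        · rw [h] at hM; exact absurd hM (lt_irrefl 0)
        · exact h
      have hpx₀ : p ≤ x₀ - δ := le_trans (min_le_right _ _) (le_of_eq hM')
      have hmapsto : ∀ x ∈ Icc (0:ℝ) p, p - x ∈ Icc (0:ℝ) 1 := by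
        intro x hx
        simp only [mem_Icc] at hx ⊢
        constructor <;> linarith [hx.1, hx.2, hp1]
      have hrefl : (∫ x in (0:ℝ)..p, vdcE (f x)) = ∫ x in (0:ℝ)..p, vdcE (f (p - x)) := by
        rw [intervalIntegral.integral_comp_sub_left (fun y => vdcE (f y)) p]
        norm_num
      rw [hrefl]
      have hinner : ∀ x ∈ Icc (0:ℝ) p, HasDerivWithinAt (fun y : ℝ => p - y) (-1) (Icc 0 p) x := by
        intro x hx
        simpa using (hasDerivWithinAt_id x (Icc (0:ℝ) p)).const_sub p
      apply vdc_far_right (fun y => f (p - y)) (fun y => g (p - y)) (fun y => -g' (p - y))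
        A B C₁ (p - x₀) δ 0 p hA hBA hC₁ hδpos hδ1 hp0 (by linarith)
        (by linarith)
      · intro x hx
        have hm1 := hmapsto x hx
        have hcomp := HasDerivWithinAt.comp x (hf' (p - x) hm1) (hinner x hx)
          (fun y hy => hmapsto y hy)
        rw [hform (p - x) hm1] at hcomp
        refine hcomp.congr_deriv (Eq.symm ?_)
        ring
      · intro x hx
        have hm1 := hmapsto x hx
        have hcomp := HasDerivWithinAt.comp x (hg' (p - x) hm1) (hinner x hx)
          (fun y hy => hmapsto y hy)
        refine hcomp.congr_deriv (Eq.symm ?_)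
        ring
      · have : ContinuousOn (fun y : ℝ => p - y) (Icc (0:ℝ) p) :=
          (continuousOn_const.sub continuousOn_id)
        exact (hcont.comp this (fun y hy => hmapsto y hy)).neg
      · intro x hx; exact hlb (p - x) (hmapsto x hx)
      · intro x hx
        rw [abs_neg]
        exact hub (p - x) (hmapsto x hx)
  -- right piece
  have hright : ‖∫ x in q..1, vdcE (f x)‖ ≤
      (1 / (2 * Real.pi)) * (3 / (C₁ * A * δ) + B / (C₁ * A ^ 2) * Real.log (2 / δ)) := by
    rcases eq_or_lt_of_le hq1 with hq1' | hq1'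
    · rw [hq1', integral_same, norm_zero]
      exact mul_nonneg (by positivity)
        (add_nonneg (by positivity) (mul_nonneg (by positivity) hlogpos))
    · have hM1 : max 0 (x₀ + δ) ≤ 1 := by
        by_contra h
        push_neg at h
        have : q = 1 := min_eq_left h.le
        linarith
      have hq' : q = max 0 (x₀ + δ) := min_eq_right hM1
      have hx₀q : x₀ + δ ≤ q := by
        rw [hq']; exact le_max_right _ _
      have hsub : Icc q 1 ⊆ Icc (0:ℝ) 1 := Icc_subset_Icc hq0 (le_refl 1)
      apply vdc_far_right f g g' A B C₁ x₀ δ q 1 hA hBA hC₁ hδpos hδ1 hq1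
        (by linarith) hx₀q
      · intro x hx
        have hm1 := hsub hx
        have := (hf' x hm1).mono hsub
        rw [hform x hm1] at this
        exact this
      · intro x hx
        exact (hg' x (hsub hx)).mono hsub
      · exact hcont.mono hsub
      · intro x hx; exact hlb x (hsub hx)
      · intro x hx; exact hub x (hsub hx)
  -- combine
  have hfinal : ‖∫ x in (0:ℝ)..1, vdcE (f x)‖ ≤ 2 * δ + 2 * (5 * δ / (2 * Real.pi)) := by
    calc ‖∫ x in (0:ℝ)..1, vdcE (f x)‖
        = ‖(∫ x in (0:ℝ)..p, vdcE (f x)) + ((∫ x in p..q, vdcE (f x))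
            + (∫ x in q..1, vdcE (f x)))‖ := by rw [s2, s1]
      _ ≤ ‖∫ x in (0:ℝ)..p, vdcE (f x)‖ + (‖∫ x in p..q, vdcE (f x)‖
            + ‖∫ x in q..1, vdcE (f x)‖) :=
          le_trans (norm_add_le _ _) (by gcongr; exact norm_add_le _ _)
      _ ≤ (1 / (2 * Real.pi)) * (3 / (C₁ * A * δ) + B / (C₁ * A ^ 2) * Real.log (2 / δ))
            + (2 * δ + (1 / (2 * Real.pi)) * (3 / (C₁ * A * δ)
              + B / (C₁ * A ^ 2) * Real.log (2 / δ))) := by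
          exact add_le_add hleft (add_le_add hmid hright)
      _ ≤ 5 * δ / (2 * Real.pi) + (2 * δ + 5 * δ / (2 * Real.pi)) := by
          exact add_le_add hEbound (add_le_add le_rfl hEbound)
      _ = 2 * δ + 2 * (5 * δ / (2 * Real.pi)) := by ring
  have hπ3 : (3:ℝ) < Real.pi := Real.pi_gt_three
  have h5π : 5 * δ / (2 * Real.pi) ≤ 2 * δ := by
    rw [div_le_iff₀ (by positivity : (0:ℝ) < 2 * Real.pi)]
    nlinarith
  linarith
end

section
/- Let F be a complex-valued C¹ function on [0,1] satisfying |F(x)| ≤ 1 and |F′(x)| ≤ M for all x ∈ [0,1], where M > 0, and set m₂ = ∫₀¹ |F(x)|² dx. Let μ be a Borel probability measure on [0,1], and let Λ(h) = sup_{t ∈ ℝ} μ([t, t+h]) for h > 0. Then for all r > 0, ∫₀¹ |F(x)| dμ(x) ≤ 2r + Λ(r/M)·(1 + m₂M/r³). -/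
open MeasureTheory intervalIntegral

/-- Kaufman's comparison lemma: for a C¹ function `F` on [0,1] with `|F| ≤ 1`,
`|F'| ≤ M`, `m₂ = ∫₀¹|F|²dx`, a Borel probability measure `μ` on [0,1], and
`Λ(h)` the maximal `μ`-measure of an interval of length `h`, one has for all
`r > 0`: `∫₀¹ |F| dμ ≤ 2r + Λ(r/M)(1 + m₂ M / r³)`. -/
theorem kaufman_comparison
    (F F' : ℝ → ℂ) (M : ℝ) (hM : 0 < M)
    (hderiv : ∀ x ∈ Set.Icc (0:ℝ) 1, HasDerivWithinAt F (F' x) (Set.Icc 0 1) x)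
    (hcont : ContinuousOn F' (Set.Icc (0:ℝ) 1))
    (hF : ∀ x ∈ Set.Icc (0:ℝ) 1, ‖F x‖ ≤ 1)
    (hF' : ∀ x ∈ Set.Icc (0:ℝ) 1, ‖F' x‖ ≤ M)
    (μ : Measure ℝ) [IsProbabilityMeasure μ] (hμ : μ (Set.Icc (0:ℝ) 1)ᶜ = 0) :
    ∀ r > (0:ℝ),
      ∫ x in Set.Icc (0:ℝ) 1, ‖F x‖ ∂μ ≤
        2 * r + (⨆ t : ℝ, (μ (Set.Icc t (t + r / M))).toReal) *
          (1 + (∫ x in (0:ℝ)..1, ‖F x‖ ^ 2) * M / r ^ 3) := by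
  intro r hr
  classical
  have hFc : ContinuousOn F (Set.Icc (0:ℝ) 1) :=
    fun x hx => (hderiv x hx).continuousWithinAt
  have hFabs : ContinuousOn (fun x => ‖F x‖) (Set.Icc (0:ℝ) 1) :=
    continuous_norm.comp_continuousOn hFc
  set h := r / M with hhdef
  have hh0 : 0 < h := div_pos hr hM
  have hMh : M * h = r := by rw [hhdef]; field_simp
  -- the sup Λ
  set Λ := ⨆ t : ℝ, (μ (Set.Icc t (t + r / M))).toReal with hΛdef
  have hbdd : BddAbove (Set.range fun t : ℝ => (μ (Set.Icc t (t + r / M))).toReal) := by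
    refine ⟨1, ?_⟩
    rintro _ ⟨t, rfl⟩
    have h1 : μ (Set.Icc t (t + r / M)) ≤ 1 := prob_le_one
    calc (μ (Set.Icc t (t + r / M))).toReal ≤ (1 : ENNReal).toReal :=
          ENNReal.toReal_mono ENNReal.one_ne_top h1
      _ = 1 := by simp
  have hΛle : ∀ t : ℝ, (μ (Set.Icc t (t + r / M))).toReal ≤ Λ :=
    fun t => le_ciSup hbdd t
  have hΛ0 : 0 ≤ Λ := le_trans ENNReal.toReal_nonneg (hΛle 0)
  -- μ of [0,1]
  have hμI : μ (Set.Icc (0:ℝ) 1) = 1 := by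
    have := measure_add_measure_compl (μ := μ) (measurableSet_Icc (a := (0:ℝ)) (b := 1))
    rw [hμ, add_zero, measure_univ] at this
    exact this
  -- the exceptional set E
  set E : Set ℝ := Set.Icc (0:ℝ) 1 ∩ (fun x => ‖F x‖) ⁻¹' Set.Ici (2*r)
    with hEdef
  have hEclosed : IsClosed E :=
    hFabs.preimage_isClosed_of_isClosed isClosed_Icc isClosed_Ici
  have hEmeas : MeasurableSet E := hEclosed.measurableSet
  have hEsub : E ⊆ Set.Icc (0:ℝ) 1 := Set.inter_subset_left
  -- covering intervals
  set K : ℕ := ⌊1 / h⌋₊ + 1 with hKdef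
  set S : Finset ℕ := (Finset.range K).filter
    (fun k => (E ∩ Set.Ico ((k:ℝ)*h) (((k:ℝ)+1)*h)).Nonempty) with hSdef
  have hcover : E ⊆ ⋃ k ∈ S, Set.Ico ((k:ℝ)*h) (((k:ℝ)+1)*h) := by
    intro x hx
    have hx01 : x ∈ Set.Icc (0:ℝ) 1 := hEsub hx
    set k := ⌊x / h⌋₊ with hkdef
    have hx0 : 0 ≤ x / h := div_nonneg hx01.1 hh0.le
    have h1 : (k:ℝ) ≤ x / h := Nat.floor_le hx0
    have h2 : x / h < (k:ℝ) + 1 := Nat.lt_floor_add_one _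
    have hk1 : (k:ℝ)*h ≤ x := by
      rw [← le_div_iff₀ hh0]; exact h1
    have hk2 : x < ((k:ℝ)+1)*h := by
      rw [← div_lt_iff₀ hh0]; exact h2
    have hkK : k < K := by
      have hle : x / h ≤ 1 / h := by gcongr; exact hx01.2
      have := Nat.floor_mono hle
      omega
    refine Set.mem_biUnion ?_ ⟨hk1, hk2⟩
    rw [hSdef]
    exact Finset.mem_filter.mpr ⟨Finset.mem_range.mpr hkK, ⟨x, hx, hk1, hk2⟩⟩
  -- every covering index has k*h ≤ 1
  have hS1 : ∀ k ∈ S, (k:ℝ) * h ≤ 1 := by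
    intro k hk
    rw [hSdef] at hk
    obtain ⟨-, x, hxE, hxI⟩ := Finset.mem_filter.mp hk
    exact hxI.1.trans (hEsub hxE).2
  -- measure of E bounded by card S * Λ
  have hEbound : (μ E).toReal ≤ (S.card : ℝ) * Λ := by
    have hmeas1 : μ E ≤ ∑ k ∈ S, μ (Set.Icc ((k:ℝ)*h) ((k:ℝ)*h + h)) := by
      calc μ E ≤ μ (⋃ k ∈ S, Set.Ico ((k:ℝ)*h) (((k:ℝ)+1)*h)) := measure_mono hcover
        _ ≤ ∑ k ∈ S, μ (Set.Ico ((k:ℝ)*h) (((k:ℝ)+1)*h)) :=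
            measure_biUnion_finset_le S _
        _ ≤ ∑ k ∈ S, μ (Set.Icc ((k:ℝ)*h) ((k:ℝ)*h + h)) := by
            refine Finset.sum_le_sum fun k _ => measure_mono ?_
            intro y hy
            have hexp : ((k:ℝ)+1)*h = (k:ℝ)*h + h := by ring
            exact ⟨hy.1, by linarith [hy.2]⟩
    have hfin : ∀ k ∈ S, μ (Set.Icc ((k:ℝ)*h) ((k:ℝ)*h + h)) ≠ ⊤ :=
      fun k _ => measure_ne_top μ _
    calc (μ E).toReal ≤ (∑ k ∈ S, μ (Set.Icc ((k:ℝ)*h) ((k:ℝ)*h + h))).toReal :=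
        ENNReal.toReal_mono
          (ENNReal.sum_lt_top.mpr fun k hk => (hfin k hk).lt_top).ne hmeas1
      _ = ∑ k ∈ S, (μ (Set.Icc ((k:ℝ)*h) ((k:ℝ)*h + h))).toReal := ENNReal.toReal_sum hfin
      _ ≤ ∑ _k ∈ S, Λ := Finset.sum_le_sum fun k _ => hΛle ((k:ℝ)*h)
      _ = (S.card : ℝ) * Λ := by rw [Finset.sum_const, nsmul_eq_mul]
  -- the "good" indices, whose intervals fit in [0,1]
  set S' : Finset ℕ := S.filter (fun k => ((k:ℝ)+1)*h ≤ 1) with hS'def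
  have hintF2 : IntegrableOn (fun x => ‖F x‖^2) (Set.Icc (0:ℝ) 1) volume :=
    (hFabs.pow 2).integrableOn_Icc
  have hsubIoc : ∀ k ∈ S', Set.Ioc ((k:ℝ)*h) (((k:ℝ)+1)*h) ⊆ Set.Icc (0:ℝ) 1 := by
    intro k hk y hy
    rw [hS'def] at hk
    have hk1 : ((k:ℝ)+1)*h ≤ 1 := (Finset.mem_filter.mp hk).2
    have hknn : (0:ℝ) ≤ (k:ℝ)*h := by positivity
    exact ⟨le_of_lt (lt_of_le_of_lt hknn hy.1), hy.2.trans hk1⟩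
  -- lower bound for the integral of |F|² on a good interval
  have hlow : ∀ k ∈ S', r^2 * h ≤
      ∫ x in Set.Ioc ((k:ℝ)*h) (((k:ℝ)+1)*h), ‖F x‖^2 := by
    intro k hk
    have hkS : k ∈ S := by rw [hS'def] at hk; exact (Finset.mem_filter.mp hk).1
    have hkS2 := hkS
    rw [hSdef] at hkS2
    obtain ⟨-, x, hxE, hxI⟩ := Finset.mem_filter.mp hkS2
    have hx01 : x ∈ Set.Icc (0:ℝ) 1 := hEsub hxE
    have key : ∀ y ∈ Set.Ioc ((k:ℝ)*h) (((k:ℝ)+1)*h), r ≤ ‖F y‖ := by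
      intro y hy
      have hy01 : y ∈ Set.Icc (0:ℝ) 1 := hsubIoc k hk hy
      have hmv : ‖F y - F x‖ ≤ M * ‖y - x‖ :=
        (convex_Icc (0:ℝ) 1).norm_image_sub_le_of_norm_hasDerivWithin_le hderiv
          (fun z hz => hF' z hz) hx01 hy01
      have hexp : ((k:ℝ)+1)*h = (k:ℝ)*h + h := by ring
      have hdist : |y - x| ≤ h := by
        rw [abs_sub_le_iff]
        constructor
        · linarith [hy.2, hxI.1]
        · linarith [hy.1.le, hxI.2.le]
      have h2r : 2*r ≤ ‖F x‖ := hxE.2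
      have t1 : ‖F x‖ - ‖F y‖ ≤ ‖F y - F x‖ := by
        rw [norm_sub_rev]
        exact norm_sub_norm_le (F x) (F y)
      have t2 : ‖F y - F x‖ ≤ M * h := by
        calc ‖F y - F x‖ ≤ M * ‖y - x‖ := hmv
          _ = M * |y - x| := by rw [Real.norm_eq_abs]
          _ ≤ M * h := mul_le_mul_of_nonneg_left hdist hM.le
      linarith
    have hi := MeasureTheory.setIntegral_ge_of_const_le (μ := volume)
      (measurableSet_Ioc) (by rw [Real.volume_Ioc]; exact ENNReal.ofReal_ne_top)
      (fun y hy => pow_le_pow_left₀ hr.le (key y hy) 2)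
      (hintF2.mono_set (hsubIoc k hk))
    have hvol : (volume (Set.Ioc ((k:ℝ)*h) (((k:ℝ)+1)*h))).toReal = h := by
      rw [Real.volume_Ioc,
        ENNReal.toReal_ofReal (by nlinarith : (0:ℝ) ≤ ((k:ℝ)+1)*h - (k:ℝ)*h)]
      ring
    rw [measureReal_def, hvol, smul_eq_mul] at hi
    linarith
  -- the good intervals are pairwise disjoint
  have hdisj : (↑S' : Set ℕ).Pairwise
      (Function.onFun Disjoint fun k : ℕ => Set.Ioc ((k:ℝ)*h) (((k:ℝ)+1)*h)) := by
    have key : ∀ a b : ℕ, a < b →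
        Disjoint (Set.Ioc ((a:ℝ)*h) (((a:ℝ)+1)*h)) (Set.Ioc ((b:ℝ)*h) (((b:ℝ)+1)*h)) := by
      intro a b hab
      refine Set.disjoint_left.mpr fun y hy1 hy2 => ?_
      have hab' : ((a:ℝ)+1) ≤ (b:ℝ) := by exact_mod_cast hab
      have hmul : ((a:ℝ)+1)*h ≤ (b:ℝ)*h := mul_le_mul_of_nonneg_right hab' hh0.le
      have := hy1.2
      have := hy2.1
      linarith
    intro k _ l _ hkl
    rcases hkl.lt_or_gt with hlt | hlt
    · exact key k l hlt
    · exact (key l k hlt).symm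
  -- sum of lower bounds vs m₂
  have hm2eq : (∫ x in (0:ℝ)..1, ‖F x‖^2)
      = ∫ x in Set.Ioc (0:ℝ) 1, ‖F x‖^2 :=
    intervalIntegral.integral_of_le zero_le_one
  have hsum : (S'.card : ℝ) * (r^2 * h) ≤ ∫ x in (0:ℝ)..1, ‖F x‖^2 := by
    rw [hm2eq]
    calc (S'.card : ℝ) * (r^2*h) = ∑ _k ∈ S', r^2*h := by
          rw [Finset.sum_const, nsmul_eq_mul]
      _ ≤ ∑ k ∈ S', ∫ x in Set.Ioc ((k:ℝ)*h) (((k:ℝ)+1)*h), ‖F x‖^2 :=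
          Finset.sum_le_sum hlow
      _ = ∫ x in ⋃ k ∈ S', Set.Ioc ((k:ℝ)*h) (((k:ℝ)+1)*h), ‖F x‖^2 :=
          (MeasureTheory.integral_biUnion_finset S' (fun k _ => measurableSet_Ioc) hdisj
            (fun k hk => hintF2.mono_set (hsubIoc k hk))).symm
      _ ≤ ∫ x in Set.Ioc (0:ℝ) 1, ‖F x‖^2 := by
          apply MeasureTheory.setIntegral_mono_set
            (hintF2.mono_set Set.Ioc_subset_Icc_self)
          · exact Filter.Eventually.of_forall fun y => by positivity
          · refine HasSubset.Subset.eventuallyLE (Set.iUnion₂_subset fun k hk => ?_)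
            intro y hy
            exact ⟨lt_of_le_of_lt (by positivity) hy.1, (hsubIoc k hk hy).2⟩
  -- at most one "bad" index
  set Sb : Finset ℕ := S.filter (fun k : ℕ => ¬ ((k:ℝ)+1)*h ≤ 1) with hSbdef
  have hbadcard : Sb.card ≤ 1 := by
    rw [hSbdef]
    refine Finset.card_le_one.mpr fun a ha b hb => ?_
    obtain ⟨haS, ha1⟩ := Finset.mem_filter.mp ha
    obtain ⟨hbS, hb1⟩ := Finset.mem_filter.mp hb
    push_neg at ha1 hb1
    have hab : a < b + 1 := by
      have h1 : (a:ℝ)*h < ((b:ℝ)+1)*h := lt_of_le_of_lt (hS1 a haS) hb1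
      have h2 : (a:ℝ) < (b:ℝ)+1 := (mul_lt_mul_iff_left₀ hh0).mp h1
      exact_mod_cast h2
    have hba : b < a + 1 := by
      have h1 : (b:ℝ)*h < ((a:ℝ)+1)*h := lt_of_le_of_lt (hS1 b hbS) ha1
      have h2 : (b:ℝ) < (a:ℝ)+1 := (mul_lt_mul_iff_left₀ hh0).mp h1
      exact_mod_cast h2
    omega
  have hcards : (S.card : ℝ) ≤ (S'.card : ℝ) + 1 := by
    have heq : S'.card + Sb.card = S.card := by
      rw [hS'def, hSbdef]
      exact Finset.card_filter_add_card_filter_not _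
    have hnat : S.card ≤ S'.card + 1 := by omega
    exact_mod_cast hnat
  -- bound on card S'
  set m2 := ∫ x in (0:ℝ)..1, ‖F x‖^2 with hm2def
  have hcard2 : (S'.card : ℝ) ≤ m2 * M / r^3 := by
    have hrh : r^2 * h = r^3 / M := by rw [hhdef]; ring
    have hr3 : (0:ℝ) < r^3 / M := by positivity
    have h1 : (S'.card:ℝ) * (r^3/M) ≤ m2 := by rw [← hrh]; exact hsum
    have h2 : (S'.card:ℝ) ≤ m2 / (r^3/M) := (le_div_iff₀ hr3).mpr h1
    calc (S'.card:ℝ) ≤ m2 / (r^3/M) := h2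
      _ = m2 * M / r^3 := by field_simp
  -- bound the μ-integral by 2r + μ(E)
  have hμres : (μ.restrict (Set.Icc (0:ℝ) 1)) Set.univ = 1 := by
    rw [Measure.restrict_apply_univ, hμI]
  have hLHS : ∫ x in Set.Icc (0:ℝ) 1, ‖F x‖ ∂μ ≤ 2*r + (μ E).toReal := by
    have hindint : Integrable (fun x => Set.indicator E (fun _ => (1:ℝ)) x)
        (μ.restrict (Set.Icc (0:ℝ) 1)) :=
      (integrable_const (1:ℝ)).indicator hEmeas
    have hgint : Integrable (fun x => 2*r + Set.indicator E (fun _ => (1:ℝ)) x)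
        (μ.restrict (Set.Icc (0:ℝ) 1)) := (integrable_const (2*r)).add hindint
    have hmono : ∀ᵐ x ∂(μ.restrict (Set.Icc (0:ℝ) 1)),
        ‖F x‖ ≤ 2*r + Set.indicator E (fun _ => (1:ℝ)) x := by
      filter_upwards [ae_restrict_mem measurableSet_Icc] with x hx
      by_cases hxE : x ∈ E
      · rw [Set.indicator_of_mem hxE]
        have := hF x hx
        linarith
      · rw [Set.indicator_of_notMem hxE]
        have hlt : ¬ (2*r ≤ ‖F x‖) := fun hc => hxE ⟨hx, hc⟩
        push_neg at hlt
        linarith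
    have h0 : (0:ℝ → ℝ) ≤ᵐ[μ.restrict (Set.Icc (0:ℝ) 1)] fun x => ‖F x‖ :=
      Filter.Eventually.of_forall fun x => norm_nonneg _
    calc ∫ x in Set.Icc (0:ℝ) 1, ‖F x‖ ∂μ
        ≤ ∫ x in Set.Icc (0:ℝ) 1, (2*r + Set.indicator E (fun _ => (1:ℝ)) x) ∂μ :=
          integral_mono_of_nonneg h0 hgint hmono
      _ = 2*r + (μ E).toReal := by
          rw [integral_add (integrable_const _) hindint, MeasureTheory.integral_const,
            MeasureTheory.integral_indicator_const (1:ℝ) hEmeas, measureReal_def, measureReal_def, hμres,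
            Measure.restrict_apply hEmeas,
            Set.inter_eq_self_of_subset_left hEsub]
          simp
  -- final assembly
  have hfinal : (μ E).toReal ≤ Λ * (1 + m2 * M / r^3) := by
    have h1 : (S.card : ℝ) ≤ 1 + m2 * M / r^3 := by linarith
    calc (μ E).toReal ≤ (S.card : ℝ) * Λ := hEbound
      _ ≤ (1 + m2*M/r^3) * Λ := mul_le_mul_of_nonneg_right h1 hΛ0
      _ = Λ * (1 + m2*M/r^3) := mul_comm _ _
  calc ∫ x in Set.Icc (0:ℝ) 1, ‖F x‖ ∂μ ≤ 2*r + (μ E).toReal := hLHS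
    _ ≤ 2*r + Λ * (1 + m2*M/r^3) := by linarith
end
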